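/- Let P be a nonzero complex polynomial of degree n with |P(i)| = 1. Then there exists λ₀ ∈ [-1,1] such that |P(λ₀)| ≥ 1/(4(n+1))^n. -/

import Mathlib

open Polynomial Complex

lemma multiset_prod_map_le (s : Multiset ℂ) (f g : ℂ → ℝ)
    (h : ∀ a ∈ s, 0 ≤ f a ∧ f a ≤ g a) :
    (s.map f).prod ≤ (s.map g).prod := by
  induction s using Multiset.induction with
  | empty => simp
  | cons a s ih =>
    simp only [Multiset.map_cons, Multiset.prod_cons]
    have ha := h a (Multiset.mem_cons_self a s)
    have hs : ∀ b ∈ s, 0 ≤ f b ∧ f b ≤ g b := fun b hb => h b (Multiset.mem_cons_of_mem hb)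
    have h1 : 0 ≤ (s.map f).prod := Multiset.prod_nonneg (by
      intro x hx; obtain ⟨b, hb, rfl⟩ := Multiset.mem_map.mp hx; exact (hs b hb).1)
    exact mul_le_mul ha.2 (ih hs) h1 (le_trans ha.1 ha.2)


/-- If `P` is a nonzero complex polynomial of degree `n` with `|P(i)| = 1`,
then there is `λ₀ ∈ [-1,1]` with `|P(λ₀)| ≥ 1/(4(n+1))^n`. -/
theorem exists_lambda_abs_eval_ge
    (n : ℕ) (P : Polynomial ℂ) (hP : P ≠ 0) (hdeg : P.natDegree = n)
    (hPi : ‖P.eval Complex.I‖ = 1) :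
    ∃ lam : ℝ, lam ∈ Set.Icc (-1 : ℝ) 1 ∧
      (1 / (4 * (n + 1 : ℝ))) ^ n ≤ ‖P.eval (lam : ℂ)‖ := by
  set N : ℝ := (n : ℝ) + 1 with hNdef
  have hN1 : (1:ℝ) ≤ N := by simp [hNdef]
  have hN0 : (0:ℝ) < N := lt_of_lt_of_le one_pos hN1
  set g : ℂ → ℕ := fun a => ⌊(a.re + 1) * N / 2⌋₊ with hgdef
  have hsplits : P.Splits := IsAlgClosed.splits P
  have hcard : Multiset.card P.roots = n := by
    rw [← hdeg]; exact (Polynomial.splits_iff_card_roots.mp hsplits)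
  obtain ⟨k₀, hk₀n, hk₀⟩ : ∃ k₀, k₀ ≤ n ∧ ∀ a ∈ P.roots, g a ≠ k₀ := by
    by_contra h
    push_neg at h
    have hsub : Finset.range (n+1) ⊆ (P.roots.map g).toFinset := by
      intro k hk
      rw [Finset.mem_range] at hk
      obtain ⟨a, ha, hga⟩ := h k (Nat.lt_succ_iff.mp hk)
      rw [Multiset.mem_toFinset, Multiset.mem_map]
      exact ⟨a, ha, hga⟩
    have h1 := Finset.card_le_card hsub
    rw [Finset.card_range] at h1
    have h2 : (P.roots.map g).toFinset.card ≤ n := by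
      calc (P.roots.map g).toFinset.card ≤ Multiset.card (P.roots.map g) :=
            Multiset.toFinset_card_le _
        _ = n := by rw [Multiset.card_map, hcard]
    omega
  set lam : ℝ := -1 + (2 * (k₀ : ℝ) + 1) / N with hlamdef
  have hlamN : lam * N = -N + 2 * (k₀ : ℝ) + 1 := by
    rw [hlamdef]; field_simp; ring
  have hk₀R : (k₀ : ℝ) ≤ (n : ℝ) := by exact_mod_cast hk₀n
  have hk₀0 : (0:ℝ) ≤ (k₀ : ℝ) := Nat.cast_nonneg k₀
  have hmem : lam ∈ Set.Icc (-1 : ℝ) 1 := by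
    constructor
    · have h1 : (0:ℝ) ≤ (2 * (k₀ : ℝ) + 1) / N := by positivity
      rw [hlamdef]; linarith
    · have h2 : (2 * (k₀ : ℝ) + 1) / N ≤ 2 := by
        rw [div_le_iff₀ hN0]; rw [hNdef]; linarith
      rw [hlamdef]; linarith
  -- key distance bound
  have hdist : ∀ a ∈ P.roots, 1 / N ≤ |lam - a.re| := by
    intro a ha
    have hne := hk₀ a ha
    rcases le_or_gt a.re (-1) with hre | hre
    · rw [le_abs]; left
      rw [div_le_iff₀ hN0]
      nlinarith [mul_le_mul_of_nonneg_right hre hN0.le]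
    · rcases le_or_gt 1 a.re with hre2 | hre2
      · rw [le_abs]; right
        rw [div_le_iff₀ hN0]
        nlinarith [mul_le_mul_of_nonneg_right hre2 hN0.le]
      · have hx0 : 0 ≤ (a.re + 1) * N / 2 := by nlinarith
        have hga : g a = ⌊(a.re + 1) * N / 2⌋₊ := by rw [hgdef]
        have hfl : ((g a : ℝ)) ≤ (a.re + 1) * N / 2 := by rw [hga]; exact Nat.floor_le hx0
        have hfl2 : (a.re + 1) * N / 2 < (g a : ℝ) + 1 := by
          rw [hga]; exact Nat.lt_floor_add_one _
        rcases Nat.lt_or_ge (g a) k₀ with hlt | hge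
        · have hlt' : (g a : ℝ) + 1 ≤ (k₀ : ℝ) := by exact_mod_cast Nat.succ_le_of_lt hlt
          rw [le_abs]; left
          rw [div_le_iff₀ hN0]
          nlinarith
        · have hgt : k₀ < g a := by omega
          have hgt' : (k₀ : ℝ) + 1 ≤ (g a : ℝ) := by exact_mod_cast Nat.succ_le_of_lt hgt
          rw [le_abs]; right
          rw [div_le_iff₀ hN0]
          nlinarith
  -- termwise ratio bound
  have hratio : ∀ a ∈ P.roots,
      0 ≤ (1 / (4 * N)) * ‖Complex.I - a‖ ∧
      (1 / (4 * N)) * ‖Complex.I - a‖ ≤ ‖(lam : ℂ) - a‖ := by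
    intro a ha
    set r := ‖(lam : ℂ) - a‖ with hrdef
    have hr0 : 0 ≤ r := norm_nonneg _
    have hre : ((lam : ℂ) - a).re = lam - a.re := by simp
    have h1 : 1 / N ≤ r := by
      refine le_trans (hdist a ha) ?_
      have := Complex.abs_re_le_norm ((lam : ℂ) - a)
      rwa [hre] at this
    have hNr : 1 ≤ r * N := by rwa [div_le_iff₀ hN0] at h1
    have htri : ‖Complex.I - a‖ ≤ 2 + r := by
      calc ‖Complex.I - a‖
          ≤ ‖Complex.I - (lam : ℂ)‖ + ‖(lam : ℂ) - a‖ := by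
            have := norm_sub_le_norm_sub_add_norm_sub Complex.I (lam : ℂ) a
            exact this
        _ ≤ 2 + r := by
            have h2 : ‖Complex.I - (lam : ℂ)‖ ≤ 2 := by
              calc ‖Complex.I - (lam : ℂ)‖
                  ≤ ‖Complex.I‖ + ‖(lam : ℂ)‖ := by
                    exact norm_sub_le _ _
                _ ≤ 2 := by
                    rw [Complex.norm_I, Complex.norm_real, Real.norm_eq_abs]
                    have := abs_le.mpr ⟨hmem.1, hmem.2⟩
                    linarith
            linarith
    constructor
    · positivity
    · rw [div_mul_eq_mul_div, one_mul, div_le_iff₀ (by positivity : (0:ℝ) < 4 * N)]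
      nlinarith [mul_le_mul_of_nonneg_right hN1 hr0]
  -- factorization
  have hfact : P = C P.leadingCoeff * (P.roots.map (fun a => X - C a)).prod :=
    hsplits.eq_prod_roots
  have heval : ∀ z : ℂ, ‖P.eval z‖
      = ‖P.leadingCoeff‖ * (P.roots.map (fun a => ‖z - a‖)).prod := by
    intro z
    conv_lhs => rw [hfact]
    rw [eval_mul, eval_C, norm_mul, Polynomial.eval_multiset_prod, Multiset.map_map,
      (fun m : Multiset ℂ => (by exact map_multiset_prod (normHom (α := ℂ)) m :
        ‖m.prod‖ = (m.map (fun x => ‖x‖)).prod)), Multiset.map_map]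
    congr 1
    apply congrArg Multiset.prod
    apply Multiset.map_congr rfl
    intro a _
    simp [Function.comp]
  have hkey : (P.roots.map (fun a => (1 / (4 * N)) * ‖Complex.I - a‖)).prod
      ≤ (P.roots.map (fun a => ‖(lam : ℂ) - a‖)).prod :=
    multiset_prod_map_le _ _ _ hratio
  have hL : (P.roots.map (fun a => (1 / (4 * N)) * ‖Complex.I - a‖)).prod
      = (1 / (4 * N)) ^ n * (P.roots.map (fun a => ‖Complex.I - a‖)).prod := by
    rw [show (fun a => (1 / (4 * N)) * ‖Complex.I - a‖)
        = fun a => (fun _ : ℂ => (1 / (4 * N))) a * (fun a => ‖Complex.I - a‖) a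
        from rfl]
    rw [Multiset.prod_map_mul]
    congr 1
    rw [Multiset.map_const', Multiset.prod_replicate, hcard]
  refine ⟨lam, hmem, ?_⟩
  have hgoalN : (1 / (4 * ((n:ℝ) + 1))) = 1 / (4 * N) := by rw [hNdef]
  rw [hgoalN]
  calc (1 / (4 * N)) ^ n
      = (1 / (4 * N)) ^ n * ‖P.eval Complex.I‖ := by rw [hPi, mul_one]
    _ = ‖P.leadingCoeff‖ *
        ((1 / (4 * N)) ^ n * (P.roots.map (fun a => ‖Complex.I - a‖)).prod) := by
          rw [heval Complex.I]; ring
    _ ≤ ‖P.leadingCoeff‖ *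
        (P.roots.map (fun a => ‖(lam : ℂ) - a‖)).prod := by
          apply mul_le_mul_of_nonneg_left _ (norm_nonneg _)
          rw [← hL]; exact hkey
    _ = ‖P.eval (lam : ℂ)‖ := (heval (lam : ℂ)).symm
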